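/- CCM of reduced GHZ-diagonal states: fix d ≥ 0 and suppose that for every M with 2 ≤ M, and every bipartition (A,B) of the M qubits, D(τ_M, (τ_M)_A ⊠ (τ_M)_B) = d. Then for every M ≥ 1, C(τ_M) = F(d, M), where F is defined as in the context. -/

import Mathlib

open scoped BigOperators ComplexOrder Matrix

/-- Matrices representing operators on qubits indexed by `ι`. -/
abbrev QMat (ι : Type) : Type := Matrix (ι → Fin 2) (ι → Fin 2) ℂ

/-- A multi-qubit state: positive semidefinite with trace one. -/
def IsState {ι : Type} [Fintype ι] [DecidableEq ι] (ρ : QMat ι) : Prop :=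
  ρ.PosSemidef ∧ ρ.trace = 1

/-- Combine `u : A → Fin 2` with `w : Aᶜ → Fin 2` into a function on all qubits. -/
def glue {ι : Type} [Fintype ι] [DecidableEq ι] (A : Finset ι)
    (u : {x // x ∈ A} → Fin 2) (w : {x // x ∈ Aᶜ} → Fin 2) : ι → Fin 2 :=
  fun x => if h : x ∈ A then u ⟨x, h⟩ else w ⟨x, Finset.mem_compl.mpr h⟩

/-- The reduced matrix on the qubits in `A`, obtained by tracing out `Aᶜ`;
`Tr_B ρ = reduceTo Bᶜ ρ`. -/
noncomputable def reduceTo {ι : Type} [Fintype ι] [DecidableEq ι] (A : Finset ι)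
    (ρ : QMat ι) : QMat {x // x ∈ A} :=
  fun u v => ∑ w : {x // x ∈ Aᶜ} → Fin 2, ρ (glue A u w) (glue A v w)

/-- The Kronecker product of a state on `A` and a state on `Aᶜ`, with the tensor
factors placed back at their original qubit positions. -/
def boxProd {ι : Type} [Fintype ι] [DecidableEq ι] (A : Finset ι)
    (σ₁ : QMat {x // x ∈ A}) (σ₂ : QMat {x // x ∈ Aᶜ}) : QMat ι :=
  fun x y =>
    σ₁ (fun a => x a.1) (fun a => y a.1) * σ₂ (fun b => x b.1) (fun b => y b.1)

/-- The cumulative correlation measure (CCM), defined recursively: it vanishes on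
one-qubit states, and otherwise is the minimum over all bipartitions `(A, Aᶜ)` of
`2^(N-2) * D(ρ, ρ_A ⊠ ρ_{Aᶜ}) + C(ρ_A) + C(ρ_{Aᶜ})`. -/
noncomputable def CCM (D : ∀ (κ : Type) [Fintype κ] [DecidableEq κ], QMat κ → QMat κ → ℝ)
    (ι : Type) [Fintype ι] [DecidableEq ι] (ρ : QMat ι) : ℝ :=
  if Fintype.card ι ≤ 1 then 0
  else
    sInf { r : ℝ |
      ∃ A : {A : Finset ι // A.Nonempty ∧ Aᶜ.Nonempty},
        r = (2 : ℝ) ^ (Fintype.card ι - 2) *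
              D ι ρ (boxProd A.1 (reduceTo A.1 ρ) (reduceTo (A.1 : Finset ι)ᶜ ρ)) +
            CCM D {x // x ∈ A.1} (reduceTo A.1 ρ) +
            CCM D {x // x ∈ (A.1 : Finset ι)ᶜ} (reduceTo (A.1 : Finset ι)ᶜ ρ) }
termination_by Fintype.card ι
decreasing_by
  · have hA : (A.1 : Finset ι) ≠ Finset.univ := by
      intro h
      rcases A.2.2 with ⟨x, hx⟩
      rw [h] at hx
      simp at hx
    calc Fintype.card {x // x ∈ A.1} = (A.1 : Finset ι).card := Fintype.card_coe _
      _ < Fintype.card ι := (Finset.card_lt_iff_ne_univ _).mpr hA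
  · have hA : ((A.1 : Finset ι)ᶜ : Finset ι) ≠ Finset.univ :=
      (Finset.compl_ne_univ_iff_nonempty _).mpr A.2.1
    calc Fintype.card {x // x ∈ (A.1 : Finset ι)ᶜ} = ((A.1 : Finset ι)ᶜ).card :=
        Fintype.card_coe _
      _ < Fintype.card ι := (Finset.card_lt_iff_ne_univ _).mpr hA
/-- The GHZ state vector on qubits indexed by `ι`: value `1/√2` at the all-zeros
and all-ones functions, and `0` elsewhere. -/
noncomputable def ghzVec (ι : Type) [Fintype ι] [DecidableEq ι] : (ι → Fin 2) → ℂ :=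
  fun x => if x = (fun _ => 0) ∨ x = (fun _ => 1) then ((Real.sqrt 2 : ℂ))⁻¹ else 0

/-- The GHZ projector `|GHZ⟩⟨GHZ|`. -/
noncomputable def ghzProj (ι : Type) [Fintype ι] [DecidableEq ι] : QMat ι :=
  fun x y => ghzVec ι x * star (ghzVec ι y)

/-- The GHZ-diagonal state `τ = ½(e₀e₀† + e₁e₁†)`: the diagonal matrix with
entries `½` at the all-zeros and all-ones indices and `0` elsewhere. -/
noncomputable def tau (ι : Type) [Fintype ι] [DecidableEq ι] : QMat ι :=
  fun x y =>
    (if x = (fun _ => 0) ∧ y = (fun _ => 0) then ((2 : ℂ))⁻¹ else 0) +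
    (if x = (fun _ => 1) ∧ y = (fun _ => 1) then ((2 : ℂ))⁻¹ else 0)
/-- The GHZ recursion value `F(x, n)` with fixed parameter `d`:
`F(x,1) = 0`, `F(x,2) = x`, `F(x,3) = 2x + d`,
`F(x,N) = 2^(N−2)·x + 2·F(d, N/2)` for even `N ≥ 4`, and
`F(x,N) = 2^(N−2)·x + F(d, (N−1)/2) + F(d, (N+1)/2)` for odd `N ≥ 5`. -/
noncomputable def F (d : ℝ) (x : ℝ) (n : ℕ) : ℝ :=
  if n ≤ 1 then 0
  else if n = 2 then x
  else if n = 3 then 2 * x + d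
  else if n % 2 = 0 then (2 : ℝ) ^ (n - 2) * x + 2 * F d d (n / 2)
  else (2 : ℝ) ^ (n - 2) * x + F d d ((n - 1) / 2) + F d d ((n + 1) / 2)
termination_by n
decreasing_by
  · omega
  · omega
  · omega
lemma F_le_one (d : ℝ) (n : ℕ) (hn : n ≤ 1) : F d d n = 0 := by rw [F]; simp [hn]

lemma F_rec (d : ℝ) (n : ℕ) (hn : 2 ≤ n) :
    F d d n = 2 ^ (n - 2) * d + F d d (n / 2) + F d d ((n + 1) / 2) := by
  rcases Nat.lt_or_ge n 4 with h4 | h4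
  · interval_cases n
    · rw [F]; norm_num [F_le_one]
    · rw [F]; norm_num [F_le_one]
      rw [show F d d 2 = d by rw [F]; norm_num]
  · rcases Nat.even_or_odd n with ⟨m, hm⟩ | ⟨m, hm⟩
    · rw [F]
      have h1 : ¬ n ≤ 1 := by omega
      have h2 : n ≠ 2 := by omega
      have h3 : n ≠ 3 := by omega
      have h5 : n % 2 = 0 := by omega
      have h6 : (n+1)/2 = n/2 := by omega
      simp only [h1, h2, h3, h5, if_false, if_true, ite_true, ite_false]
      rw [h6]; ring
    · rw [F]
      have h1 : ¬ n ≤ 1 := by omega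
      have h2 : n ≠ 2 := by omega
      have h3 : n ≠ 3 := by omega
      have h5 : ¬ n % 2 = 0 := by omega
      have h6 : (n-1)/2 = n/2 := by omega
      simp only [h1, h2, h3, h5, if_false, if_true, ite_true, ite_false]
      rw [h6]
lemma delta_rec (d : ℝ) (n : ℕ) (hn : 2 ≤ n) :
    F d d (n + 1) - F d d n =
      2 ^ (n - 2) * d + (F d d (n / 2 + 1) - F d d (n / 2)) := by
  rw [F_rec d (n+1) (by omega), F_rec d n hn]
  have h1 : (n + 1 + 1) / 2 = n / 2 + 1 := by omega
  have h2 : n + 1 - 2 = (n - 2) + 1 := by omega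
  rw [h1, h2, pow_succ]
  ring

lemma delta_nonneg (d : ℝ) (hd : 0 ≤ d) : ∀ n : ℕ, 0 ≤ F d d (n + 1) - F d d n := by
  intro n
  induction n using Nat.strong_induction_on with
  | _ n IH =>
    rcases Nat.lt_or_ge n 2 with h | h
    · interval_cases n
      · simp [F_le_one]
      · rw [F_le_one d 1 le_rfl, show F d d 2 = d by rw [F]; norm_num]; linarith
    · rw [delta_rec d n h]
      have := IH (n / 2) (by omega)
      positivity
lemma delta_mono (d : ℝ) (hd : 0 ≤ d) :
    ∀ n : ℕ, 1 ≤ n → F d d (n + 1) - F d d n ≤ F d d (n + 2) - F d d (n + 1) := by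
  intro n
  induction n using Nat.strong_induction_on with
  | _ n IH =>
    intro hn
    rcases Nat.lt_or_ge n 2 with h | h
    · interval_cases n
      rw [delta_rec d 2 le_rfl, F_le_one d 1 le_rfl,
        show F d d 2 = d by rw [F]; norm_num]
      norm_num; linarith
    · rw [delta_rec d n h, delta_rec d (n + 1) (by omega)]
      have hpow : (2 : ℝ) ^ (n - 2) ≤ 2 ^ (n + 1 - 2) := by
        apply pow_le_pow_right₀ (by norm_num); omega
      rcases Nat.even_or_odd n with ⟨m, hm⟩ | ⟨m, hm⟩
      · have h1 : (n + 1) / 2 = n / 2 := by omega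
        rw [h1]
        nlinarith
      · have h1 : (n + 1) / 2 = n / 2 + 1 := by omega
        rw [h1]
        have h2 : 1 ≤ n / 2 := by omega
        have := IH (n / 2) (by omega) h2
        have h3 : n / 2 + 1 + 1 = n / 2 + 2 := by omega
        rw [h3] at *
        nlinarith

lemma delta_mono' (d : ℝ) (hd : 0 ≤ d) (a b : ℕ) (ha : 1 ≤ a) (hab : a ≤ b) :
    F d d (a + 1) - F d d a ≤ F d d (b + 1) - F d d b := by
  induction b, hab using Nat.le_induction with
  | base => exact le_refl _
  | succ b hb IH => exact le_trans IH (delta_mono d hd b (by omega))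
-- min lemma, going down to the balanced split
lemma min_step (d : ℝ) (hd : 0 ≤ d) (n k : ℕ) (hk : 1 ≤ k) (h : k + 2 ≤ n - k) :
    F d d (k + 1) + F d d (n - k - 1) ≤ F d d k + F d d (n - k) := by
  have h1 : n - k = (n - k - 1) + 1 := by omega
  have h2 := delta_mono' d hd k (n - k - 1) hk (by omega)
  rw [← h1] at h2; linarith

lemma min_balanced (d : ℝ) (hd : 0 ≤ d) (n : ℕ) :
    ∀ m k : ℕ, 1 ≤ k → k + m = n / 2 →
      F d d (n / 2) + F d d (n - n / 2) ≤ F d d k + F d d (n - k) := by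
  intro m
  induction m with
  | zero => intro k hk hkm; simp at hkm; rw [hkm]
  | succ m IH =>
    intro k hk hkm
    have hn : k + 2 ≤ n - k := by omega
    calc F d d (n / 2) + F d d (n - n / 2)
        ≤ F d d (k + 1) + F d d (n - (k + 1)) := by
          have := IH (k + 1) (by omega) (by omega)
          have : n - (k+1) = n - k - 1 := by omega
          rw [this]
          exact IH (k + 1) (by omega) (by omega) |>.trans_eq (by rw [this])
      _ ≤ F d d k + F d d (n - k) := by
          have := min_step d hd n k hk hn
          have h2 : n - (k+1) = n - k - 1 := by omega
          rw [h2]; exact this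

lemma min_all (d : ℝ) (hd : 0 ≤ d) (n k : ℕ) (hn : 2 ≤ n) (hk : 1 ≤ k) (hk2 : k ≤ n - 1) :
    F d d (n / 2) + F d d ((n + 1) / 2) ≤ F d d k + F d d (n - k) := by
  have hh : n - n / 2 = (n + 1) / 2 := by omega
  rw [← hh]
  rcases le_or_gt k (n / 2) with h | h
  · exact min_balanced d hd n (n / 2 - k) k hk (by omega)
  · have h1 : n - k ≤ n / 2 := by omega
    have h2 : 1 ≤ n - k := by omega
    have := min_balanced d hd n (n / 2 - (n - k)) (n - k) h2 (by omega)
    have h3 : n - (n - k) = k := by omega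
    rw [h3] at this; linarith
lemma glue_eq_const {ι : Type} [Fintype ι] [DecidableEq ι] (A : Finset ι)
    (u : {x // x ∈ A} → Fin 2) (w : {x // x ∈ Aᶜ} → Fin 2) (b : Fin 2) :
    glue A u w = (fun _ => b) ↔ u = (fun _ => b) ∧ w = (fun _ => b) := by
  constructor
  · intro h
    constructor
    · funext x
      have := congrFun h x.1
      simpa [glue, x.2] using this
    · funext x
      have hx : x.1 ∉ A := Finset.mem_compl.mp x.2
      have := congrFun h x.1
      simpa [glue, hx] using this
  · rintro ⟨h1, h2⟩
    funext x
    by_cases h : x ∈ A <;> simp [glue, h, h1, h2]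

lemma reduce_tau {ι : Type} [Fintype ι] [DecidableEq ι] (A : Finset ι) :
    reduceTo A (tau ι) = tau {x // x ∈ A} := by
  funext u v
  simp only [reduceTo, tau]
  rw [Finset.sum_add_distrib]
  congr 1
  · rw [Finset.sum_congr rfl (fun w _ => ?_), Finset.sum_ite_eq' Finset.univ
      (fun _ => (0 : Fin 2)) (fun _ => if u = (fun _ => 0) ∧ v = (fun _ => 0) then ((2:ℂ))⁻¹ else 0)]
    · simp
    · simp only [glue_eq_const]
      by_cases hu : u = (fun _ => 0) <;> by_cases hv : v = (fun _ => 0) <;>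
        by_cases hw : w = (fun _ => (0 : Fin 2)) <;> simp [hu, hv, hw]
  · rw [Finset.sum_congr rfl (fun w _ => ?_), Finset.sum_ite_eq' Finset.univ
      (fun _ => (1 : Fin 2)) (fun _ => if u = (fun _ => 1) ∧ v = (fun _ => 1) then ((2:ℂ))⁻¹ else 0)]
    · simp
    · simp only [glue_eq_const]
      by_cases hu : u = (fun _ => 1) <;> by_cases hv : v = (fun _ => 1) <;>
        by_cases hw : w = (fun _ => (1 : Fin 2)) <;> simp [hu, hv, hw]
lemma ccm_tau_card
    (D : ∀ (κ : Type) [Fintype κ] [DecidableEq κ], QMat κ → QMat κ → ℝ)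
    (d : ℝ) (hd : 0 ≤ d)
    (hτ : ∀ (ι : Type) [Fintype ι] [DecidableEq ι], 2 ≤ Fintype.card ι →
      ∀ A : Finset ι, A.Nonempty → Aᶜ.Nonempty →
        D ι (tau ι) (boxProd A (reduceTo A (tau ι)) (reduceTo Aᶜ (tau ι))) = d) :
    ∀ N : ℕ, ∀ (ι : Type) [Fintype ι] [DecidableEq ι], Fintype.card ι = N →
      CCM D ι (tau ι) = F d d N := by
  intro N
  induction N using Nat.strong_induction_on with
  | _ N IH =>
    intro ι _ _ hcard
    rcases Nat.lt_or_ge N 2 with hN | hN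
    · rw [CCM, if_pos (by omega), F_le_one d N (by omega)]
    · rw [CCM, if_neg (by omega)]
      have hval : ∀ A : Finset ι, A.Nonempty → Aᶜ.Nonempty →
          (2 : ℝ) ^ (Fintype.card ι - 2) *
              D ι (tau ι) (boxProd A (reduceTo A (tau ι)) (reduceTo Aᶜ (tau ι))) +
            CCM D {x // x ∈ A} (reduceTo A (tau ι)) +
            CCM D {x // x ∈ Aᶜ} (reduceTo Aᶜ (tau ι)) =
          (2 : ℝ) ^ (N - 2) * d + F d d A.card + F d d (N - A.card) := by
        intro A hA hAc
        have hcc : A.card + Aᶜ.card = N := by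
          rw [← hcard]; exact Finset.card_add_card_compl A
        have hk1 : 1 ≤ A.card := hA.card_pos
        have hk1' : 1 ≤ Aᶜ.card := hAc.card_pos
        rw [hτ ι (by omega) A hA hAc, reduce_tau, reduce_tau,
          IH A.card (by omega) _ (Fintype.card_coe A),
          IH Aᶜ.card (by omega) _ (Fintype.card_coe Aᶜ), hcard,
          show Aᶜ.card = N - A.card by omega]
      set V : ℝ := (2 : ℝ) ^ (N - 2) * d + F d d (N / 2) + F d d ((N + 1) / 2) with hV
      have hmem : V ∈ { r : ℝ |
          ∃ A : {A : Finset ι // A.Nonempty ∧ Aᶜ.Nonempty},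
            r = (2 : ℝ) ^ (Fintype.card ι - 2) *
                  D ι (tau ι) (boxProd A.1 (reduceTo A.1 (tau ι)) (reduceTo (A.1 : Finset ι)ᶜ (tau ι))) +
                CCM D {x // x ∈ A.1} (reduceTo A.1 (tau ι)) +
                CCM D {x // x ∈ (A.1 : Finset ι)ᶜ} (reduceTo (A.1 : Finset ι)ᶜ (tau ι)) } := by
        obtain ⟨A, -, hAcard⟩ := Finset.exists_subset_card_eq (s := (Finset.univ : Finset ι)) (n := N / 2)
          (by rw [Finset.card_univ, hcard]; omega)
        have hA : A.Nonempty := Finset.card_pos.mp (by omega)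
        have hAc : Aᶜ.Nonempty := by
          apply Finset.card_pos.mp
          rw [Finset.card_compl, hcard, hAcard]; omega
        refine ⟨⟨A, hA, hAc⟩, ?_⟩
        rw [hval A hA hAc, hAcard, show N - N / 2 = (N + 1) / 2 by omega, hV]
      have hbound : ∀ r ∈ { r : ℝ |
          ∃ A : {A : Finset ι // A.Nonempty ∧ Aᶜ.Nonempty},
            r = (2 : ℝ) ^ (Fintype.card ι - 2) *
                  D ι (tau ι) (boxProd A.1 (reduceTo A.1 (tau ι)) (reduceTo (A.1 : Finset ι)ᶜ (tau ι))) +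
                CCM D {x // x ∈ A.1} (reduceTo A.1 (tau ι)) +
                CCM D {x // x ∈ (A.1 : Finset ι)ᶜ} (reduceTo (A.1 : Finset ι)ᶜ (tau ι)) },
          V ≤ r := by
        rintro r ⟨A, rfl⟩
        rw [hval A.1 A.2.1 A.2.2]
        have hcc : A.1.card + (A.1)ᶜ.card = N := by
          rw [← hcard]; exact Finset.card_add_card_compl A.1
        have hk1 : 1 ≤ A.1.card := A.2.1.card_pos
        have hk1' : 1 ≤ (A.1)ᶜ.card := A.2.2.card_pos
        have := min_all d hd N A.1.card hN hk1 (by omega)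
        rw [hV]; linarith
      rw [le_antisymm (csInf_le ⟨V, hbound⟩ hmem) (le_csInf ⟨V, hmem⟩ hbound)]
      rw [F_rec d N hN, hV]

/-- CCM of reduced GHZ-diagonal states: fix `d ≥ 0` and suppose
that for every system of `M ≥ 2` qubits and every bipartition `(A,B)`,
`D(τ_M, (τ_M)_A ⊠ (τ_M)_B) = d`. Then for every `M ≥ 1`, `C(τ_M) = F(d, M)`. -/
theorem ccm_tau_eq_F
    (D : ∀ (κ : Type) [Fintype κ] [DecidableEq κ], QMat κ → QMat κ → ℝ)
    (d : ℝ) (hd : 0 ≤ d)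
    (hτ : ∀ (ι : Type) [Fintype ι] [DecidableEq ι], 2 ≤ Fintype.card ι →
      ∀ A : Finset ι, A.Nonempty → Aᶜ.Nonempty →
        D ι (tau ι) (boxProd A (reduceTo A (tau ι)) (reduceTo Aᶜ (tau ι))) = d)
    (M : ℕ) (hM : 1 ≤ M) :
    CCM D (Fin M) (tau (Fin M)) = F d d M :=
  ccm_tau_card D d hd hτ M (Fin M) (Fintype.card_fin M)
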